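/- The inverse Gaussian Q-function Q^{-1} is strictly convex on the interval (0, 1/2). -/

import Mathlib

open Real Set Filter MeasureTheory

/-- The Gaussian tail function `Q(t) = (1/√(2π)) ∫ t..∞, exp(-u²/2) du`. -/
noncomputable def gaussQ (t : ℝ) : ℝ :=
  (Real.sqrt (2 * Real.pi))⁻¹ * ∫ u in Set.Ioi t, Real.exp (-u ^ 2 / 2)

/-- The inverse of the Gaussian tail function. -/
noncomputable def Qinv : ℝ → ℝ := Function.invFun gaussQ

lemma gaussf_eq (u : ℝ) : Real.exp (-u ^ 2 / 2) = Real.exp (-(1/2 : ℝ) * u ^ 2) := by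
  ring_nf

lemma gaussf_integrable : Integrable (fun u : ℝ => Real.exp (-u ^ 2 / 2)) := by
  simp_rw [gaussf_eq]
  exact integrable_exp_neg_mul_sq (by norm_num)

lemma gaussf_cont : Continuous (fun u : ℝ => Real.exp (-u ^ 2 / 2)) := by
  continuity

lemma gaussQ_eq (t : ℝ) : gaussQ t =
    (Real.sqrt (2 * Real.pi))⁻¹ *
      ((∫ u : ℝ, Real.exp (-u ^ 2 / 2)) - (∫ u in Set.Iic (0:ℝ), Real.exp (-u ^ 2 / 2))
        - ∫ u in (0:ℝ)..t, Real.exp (-u ^ 2 / 2)) := by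
  have h1 : (∫ u in Set.Iic t, Real.exp (-u ^ 2 / 2)) + (∫ u in Set.Ioi t, Real.exp (-u ^ 2 / 2))
      = ∫ u : ℝ, Real.exp (-u ^ 2 / 2) :=
    intervalIntegral.integral_Iic_add_Ioi gaussf_integrable.integrableOn gaussf_integrable.integrableOn
  have h2 : (∫ u in Set.Iic t, Real.exp (-u ^ 2 / 2)) - (∫ u in Set.Iic (0:ℝ), Real.exp (-u ^ 2 / 2))
      = ∫ u in (0:ℝ)..t, Real.exp (-u ^ 2 / 2) :=
    intervalIntegral.integral_Iic_sub_Iic gaussf_integrable.integrableOn gaussf_integrable.integrableOn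
  unfold gaussQ
  rw [← h1, ← h2]
  ring

lemma gaussQ_hasDerivAt (t : ℝ) :
    HasDerivAt gaussQ (-((Real.sqrt (2 * Real.pi))⁻¹ * Real.exp (-t ^ 2 / 2))) t := by
  have h : HasDerivAt (fun u => ∫ x in (0:ℝ)..u, Real.exp (-x ^ 2 / 2)) (Real.exp (-t ^ 2 / 2)) t :=
    intervalIntegral.integral_hasDerivAt_right gaussf_integrable.intervalIntegrable
      gaussf_cont.aestronglyMeasurable.stronglyMeasurableAtFilter gaussf_cont.continuousAt
  have h2 := ((h.const_sub ((∫ u : ℝ, Real.exp (-u ^ 2 / 2)) - (∫ u in Set.Iic (0:ℝ), Real.exp (-u ^ 2 / 2)))).const_mul ((Real.sqrt (2 * Real.pi))⁻¹))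
  have heq : gaussQ = fun t => (Real.sqrt (2 * Real.pi))⁻¹ *
      ((∫ u : ℝ, Real.exp (-u ^ 2 / 2)) - (∫ u in Set.Iic (0:ℝ), Real.exp (-u ^ 2 / 2))
        - ∫ u in (0:ℝ)..t, Real.exp (-u ^ 2 / 2)) := funext gaussQ_eq
  rw [heq]
  exact h2.congr_deriv (by ring)

lemma gaussQ_differentiable : Differentiable ℝ gaussQ :=
  fun t => (gaussQ_hasDerivAt t).differentiableAt

lemma gaussQ_deriv : deriv gaussQ = fun t => -((Real.sqrt (2 * Real.pi))⁻¹ * Real.exp (-t ^ 2 / 2)) :=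
  funext fun t => (gaussQ_hasDerivAt t).deriv

lemma sqrt_two_pi_pos : 0 < Real.sqrt (2 * Real.pi) :=
  Real.sqrt_pos.2 (by positivity)

lemma gaussQ_strictAnti : StrictAnti gaussQ := by
  apply strictAnti_of_deriv_neg
  intro x
  rw [gaussQ_deriv]
  have h := sqrt_two_pi_pos
  have : 0 < (Real.sqrt (2 * Real.pi))⁻¹ * Real.exp (-x ^ 2 / 2) := by positivity
  linarith

lemma gaussQ_zero : gaussQ 0 = 1 / 2 := by
  unfold gaussQ
  simp_rw [gaussf_eq]
  rw [integral_gaussian_Ioi]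
  rw [show Real.pi / (1/2) = 2 * Real.pi by ring]
  have hs : Real.sqrt (2 * Real.pi) ≠ 0 := ne_of_gt sqrt_two_pi_pos
  field_simp

lemma gaussQ_tendsto : Tendsto gaussQ atTop (nhds 0) := by
  have h := intervalIntegral_tendsto_integral_Ioi (0:ℝ)
    (gaussf_integrable.integrableOn (s := Set.Ioi 0)) (tendsto_id (α := ℝ))
  have h1 : (∫ u in Set.Iic (0:ℝ), Real.exp (-u ^ 2 / 2)) + (∫ u in Set.Ioi (0:ℝ), Real.exp (-u ^ 2 / 2))
      = ∫ u : ℝ, Real.exp (-u ^ 2 / 2) :=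
    intervalIntegral.integral_Iic_add_Ioi gaussf_integrable.integrableOn gaussf_integrable.integrableOn
  have key : Tendsto (fun t : ℝ => (Real.sqrt (2 * Real.pi))⁻¹ *
      ((∫ u : ℝ, Real.exp (-u ^ 2 / 2)) - (∫ u in Set.Iic (0:ℝ), Real.exp (-u^2/2)) - ∫ u in (0:ℝ)..t, Real.exp (-u ^ 2 / 2)))
      atTop (nhds ((Real.sqrt (2 * Real.pi))⁻¹ * ((∫ u : ℝ, Real.exp (-u ^ 2 / 2)) - (∫ u in Set.Iic (0:ℝ), Real.exp (-u^2/2)) - (∫ u in Set.Ioi (0:ℝ), Real.exp (-u^2/2))))) :=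
    ((tendsto_const_nhds.sub h)).const_mul _
  have : (∫ u : ℝ, Real.exp (-u ^ 2 / 2)) - (∫ u in Set.Iic (0:ℝ), Real.exp (-u^2/2)) - (∫ u in Set.Ioi (0:ℝ), Real.exp (-u^2/2)) = 0 := by
    rw [← h1]; ring
  rw [this, mul_zero] at key
  exact key.congr fun t => (gaussQ_eq t).symm

lemma gaussQ_surj {y : ℝ} (hy : y ∈ Set.Ioo (0:ℝ) (1/2)) : ∃ x, 0 < x ∧ gaussQ x = y := by
  obtain ⟨hy0, hy2⟩ := hy
  obtain ⟨T, hT⟩ := (gaussQ_tendsto.eventually (eventually_lt_nhds hy0)).exists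
  have hcont : ContinuousOn gaussQ (Set.Icc 0 T) :=
    gaussQ_differentiable.continuous.continuousOn
  have h0T : (0:ℝ) ≤ T := by
    by_contra h
    have := gaussQ_strictAnti (lt_of_not_ge h)
    rw [gaussQ_zero] at this
    linarith
  have : y ∈ Set.Ioo (gaussQ T) (gaussQ 0) := ⟨hT, by rw [gaussQ_zero]; exact hy2⟩
  obtain ⟨x, hx, hgx⟩ := intermediate_value_Ioo' h0T hcont this
  exact ⟨x, hx.1, hgx⟩

lemma Qinv_gaussQ (x : ℝ) : Qinv (gaussQ x) = x :=
  Function.leftInverse_invFun gaussQ_strictAnti.injective x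

lemma gaussQ_deriv2 (x : ℝ) :
    deriv (deriv gaussQ) x = (Real.sqrt (2 * Real.pi))⁻¹ * Real.exp (-x ^ 2 / 2) * x := by
  rw [gaussQ_deriv]
  have h1 : HasDerivAt (fun t : ℝ => -t ^ 2 / 2) (-x) x := by
    have h := ((hasDerivAt_pow 2 x).neg.div_const 2)
    exact h.congr_deriv (by push_cast; ring)
  have h2 := (h1.exp.const_mul ((Real.sqrt (2 * Real.pi))⁻¹)).neg
  exact h2.deriv.trans (by ring)

lemma gaussQ_strictConvexOn : StrictConvexOn ℝ (Set.Ici (0:ℝ)) gaussQ := by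
  apply strictConvexOn_of_deriv2_pos (convex_Ici 0) gaussQ_differentiable.continuous.continuousOn
  intro x hx
  rw [interior_Ici] at hx
  show 0 < deriv (deriv gaussQ) x
  rw [gaussQ_deriv2]
  have h := sqrt_two_pi_pos
  have hx' : 0 < x := hx
  positivity

theorem stmt_2 : StrictConvexOn ℝ (Set.Ioo (0 : ℝ) (1 / 2)) Qinv := by
  refine ⟨convex_Ioo _ _, ?_⟩
  intro y1 hy1 y2 hy2 hne a b ha hb hab
  obtain ⟨x1, hx1pos, hx1⟩ := gaussQ_surj hy1
  obtain ⟨x2, hx2pos, hx2⟩ := gaussQ_surj hy2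
  have hymem : a • y1 + b • y2 ∈ Set.Ioo (0:ℝ) (1/2) :=
    (convex_Ioo (0:ℝ) (1/2)) hy1 hy2 ha.le hb.le hab
  obtain ⟨z, hzpos, hz⟩ := gaussQ_surj hymem
  have hxne : x1 ≠ x2 := fun h => hne (by rw [← hx1, ← hx2, h])
  have hconv := gaussQ_strictConvexOn.2 (Set.mem_Ici.2 hx1pos.le) (Set.mem_Ici.2 hx2pos.le) hxne ha hb hab
  rw [hx1, hx2] at hconv
  -- hconv : gaussQ (a • x1 + b • x2) < a • y1 + b • y2 = gaussQ z
  rw [← hz] at hconv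
  have hzlt : z < a • x1 + b • x2 := by
    by_contra h
    push_neg at h
    rcases eq_or_lt_of_le h with h' | h'
    · rw [h'] at hconv; exact lt_irrefl _ hconv
    · exact absurd hconv (not_lt.2 (gaussQ_strictAnti h').le)
  calc Qinv (a • y1 + b • y2) = z := by rw [← hz, Qinv_gaussQ]
    _ < a • x1 + b • x2 := hzlt
    _ = a • Qinv y1 + b • Qinv y2 := by rw [← hx1, ← hx2, Qinv_gaussQ, Qinv_gaussQ]
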